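/- Let F : ℝ → [0,1] be nondecreasing and let p̄ ≥ 0 and a finite multiset S of prices satisfy 1 − ∏_{p ∈ S} F(p) ≤ 1/12 < 1 − F(p̄) · ∏_{p ∈ S} F(p). Then with q = 1 − F(p̄)·∏_{p∈S} F(p), we have p̄/12 ≤ q · p̄, and q · p̄ is at most the greedy revenue of the menu S ∪ {p̄}; i.e., p̄/12 ≤ E_v[max{ p ∈ S ∪ {p̄} : v_p ≥ p }], where the values v_p are i.i.d. with CDF F and the max of the empty set is 0. -/

import Mathlib

open MeasureTheory ProbabilityTheory

theorem stmt_14 {Ω : Type*} [MeasurableSpace Ω] (μ : Measure Ω) [IsProbabilityMeasure μ]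
    (F : ℝ → ℝ) (hmono : Monotone F) (hF01 : ∀ t, F t ∈ Set.Icc (0 : ℝ) 1)
    (n : ℕ) (P : Fin (n + 1) → ℝ) (pbar : ℝ) (hpbar : 0 ≤ pbar)
    (hlast : P (Fin.last n) = pbar)
    (hexp : ∀ i : Fin (n + 1), pbar ≤ P i)
    (hS : 1 - ∏ i : Fin n, F (P i.castSucc) ≤ 1 / 12)
    (hS' : (1 : ℝ) / 12 < 1 - F pbar * ∏ i : Fin n, F (P i.castSucc))
    (v : Fin (n + 1) → Ω → ℝ) (hmeas : ∀ i, Measurable (v i))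
    (hindep : iIndepFun v μ)
    (hcdf : ∀ i (t : ℝ), (μ {ω | v i ω ≤ t}).toReal = F t)
    (q : ℝ) (hq : q = 1 - F pbar * ∏ i : Fin n, F (P i.castSucc)) :
    pbar / 12 ≤ q * pbar ∧
      q * pbar ≤ ∫ ω, sSup ({x | ∃ i, x = P i ∧ P i ≤ v i ω} ∪ {0}) ∂μ := by
  have hq12 : (1 : ℝ) / 12 ≤ q := le_of_lt (hq ▸ hS')
  constructor
  · calc pbar / 12 = (1 / 12) * pbar := by ring
      _ ≤ q * pbar := mul_le_mul_of_nonneg_right hq12 hpbar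
  -- set up the pointwise function
  set f : Fin (n + 1) → Ω → ℝ := fun i ω => if P i ≤ v i ω then P i else 0 with hf
  have hne : (Finset.univ : Finset (Fin (n + 1))).Nonempty := Finset.univ_nonempty
  set h : Ω → ℝ := fun ω => Finset.univ.sup' hne (fun i => f i ω) with hh
  have hPnonneg : ∀ i, (0 : ℝ) ≤ P i := fun i => le_trans hpbar (hexp i)
  have hfnonneg : ∀ i ω, 0 ≤ f i ω := by
    intro i ω; simp only [hf]; split <;> [exact hPnonneg i; exact le_rfl]
  have hgh : ∀ ω, sSup ({x | ∃ i, x = P i ∧ P i ≤ v i ω} ∪ {0}) = h ω := by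
    intro ω
    have hub : ∀ x ∈ ({x | ∃ i, x = P i ∧ P i ≤ v i ω} ∪ {0} : Set ℝ), x ≤ h ω := by
      rintro x (⟨i, rfl, hi⟩ | rfl)
      · have : f i ω = P i := if_pos hi
        calc P i = f i ω := this.symm
          _ ≤ h ω := Finset.le_sup' (fun j => f j ω) (Finset.mem_univ i)
      · exact le_trans (hfnonneg ⟨0, Nat.succ_pos n⟩ ω)
          (Finset.le_sup' (fun j => f j ω) (Finset.mem_univ ⟨0, Nat.succ_pos n⟩))
    have hmem : h ω ∈ ({x | ∃ i, x = P i ∧ P i ≤ v i ω} ∪ {0} : Set ℝ) := by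
      obtain ⟨i, -, hi⟩ := Finset.exists_mem_eq_sup' hne (fun i => f i ω)
      by_cases hc : P i ≤ v i ω
      · left; exact ⟨i, hi.trans (by simp [hf, hc]), hc⟩
      · right; exact hi.trans (by simp [hf, hc])
    exact le_antisymm (csSup_le ⟨0, Or.inr rfl⟩ hub) (le_csSup ⟨h ω, hub⟩ hmem)
  have hfm : ∀ i, Measurable (f i) := by
    intro i
    exact Measurable.ite (measurableSet_le measurable_const (hmeas i))
      measurable_const measurable_const
  have hhm : Measurable h := by
    have := Finset.measurable_sup' hne (fun i _ => hfm i)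
    convert this using 1
    ext ω
    simp [hh, Finset.sup'_apply]
  -- the event
  set A : Set Ω := ⋃ i, v i ⁻¹' Set.Ici (P i) with hA
  have hAm : MeasurableSet A :=
    MeasurableSet.iUnion fun i => (hmeas i) measurableSet_Ici
  -- h is integrable (bounded by constant)
  set C : ℝ := Finset.univ.sup' hne P with hC
  have hhub : ∀ ω, h ω ≤ C := by
    intro ω
    apply Finset.sup'_le
    intro i _
    simp only [hf]
    split
    · exact Finset.le_sup' P (Finset.mem_univ i)
    · exact le_trans (hPnonneg i) (Finset.le_sup' P (Finset.mem_univ i))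
  have hhint : Integrable h μ := by
    refine ⟨hhm.aestronglyMeasurable, ?_⟩
    apply HasFiniteIntegral.of_bounded (C := C)
    filter_upwards with ω
    rw [Real.norm_eq_abs, abs_of_nonneg (le_trans (hfnonneg ⟨0, Nat.succ_pos n⟩ ω) (Finset.le_sup' (fun j => f j ω) (Finset.mem_univ (⟨0, Nat.succ_pos n⟩ : Fin (n+1)))))]
    exact hhub ω
  -- lower bound function
  have hptwise : ∀ ω, A.indicator (fun _ => pbar) ω ≤ h ω := by
    intro ω
    by_cases hω : ω ∈ A
    · rw [Set.indicator_of_mem hω]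
      obtain ⟨i, hi⟩ := Set.mem_iUnion.mp hω
      calc pbar ≤ P i := hexp i
        _ = f i ω := (if_pos hi).symm
        _ ≤ h ω := Finset.le_sup' (fun j => f j ω) (Finset.mem_univ i)
    · rw [Set.indicator_of_notMem hω]
      exact le_trans (hfnonneg ⟨0, Nat.succ_pos n⟩ ω) (Finset.le_sup' (fun j => f j ω) (Finset.mem_univ ⟨0, Nat.succ_pos n⟩))
  have hint1 : ∫ ω, A.indicator (fun _ => pbar) ω ∂μ ≤ ∫ ω, h ω ∂μ := by
    refine integral_mono_of_nonneg ?_ hhint (Filter.Eventually.of_forall hptwise)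
    filter_upwards with ω
    exact Set.indicator_nonneg (fun _ _ => hpbar) ω
  have hindval : ∫ ω, A.indicator (fun _ => pbar) ω ∂μ = (μ A).toReal * pbar := by
    rw [integral_indicator_const _ hAm]; simp [smul_eq_mul, measureReal_def]
  -- probability bound : q ≤ (μ A).toReal
  set B : Set Ω := ⋂ i, v i ⁻¹' Set.Iic (P i) with hB
  have hBm : MeasurableSet B := MeasurableSet.iInter fun i => (hmeas i) measurableSet_Iic
  have hAcB : Aᶜ ⊆ B := by
    intro ω hω
    simp only [hA, Set.mem_compl_iff, Set.mem_iUnion, not_exists, Set.mem_preimage,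
      Set.mem_Ici, not_le] at hω
    exact Set.mem_iInter.mpr fun i => le_of_lt (hω i)
  have hμB : (μ B).toReal = ∏ i : Fin (n + 1), F (P i) := by
    have := hindep.measure_inter_preimage_eq_mul (S := Finset.univ)
      (sets := fun i => Set.Iic (P i)) (fun i _ => measurableSet_Iic)
    simp only [Finset.mem_univ, Set.iInter_true, ← hB] at this
    rw [this, ENNReal.toReal_prod]
    refine Finset.prod_congr rfl fun i _ => ?_
    have : v i ⁻¹' Set.Iic (P i) = {ω | v i ω ≤ P i} := rfl
    rw [this, hcdf i (P i)]
  have hprodsplit : ∏ i : Fin (n + 1), F (P i)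
      = (∏ i : Fin n, F (P i.castSucc)) * F pbar := by
    rw [Fin.prod_univ_castSucc, hlast]
  have hqle : q ≤ (μ A).toReal := by
    have hsum : (μ A).toReal + (μ Aᶜ).toReal = 1 := by
      rw [← ENNReal.toReal_add (measure_ne_top μ A) (measure_ne_top μ Aᶜ),
        measure_add_measure_compl hAm]
      simp
    have hmono2 : (μ Aᶜ).toReal ≤ (μ B).toReal :=
      ENNReal.toReal_mono (measure_ne_top μ B) (measure_mono hAcB)
    have : (μ A).toReal = 1 - (μ Aᶜ).toReal := by linarith
    rw [this, hq]
    rw [hμB, hprodsplit] at hmono2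
    linarith [hmono2]
  calc q * pbar ≤ (μ A).toReal * pbar :=
        mul_le_mul_of_nonneg_right hqle hpbar
    _ = ∫ ω, A.indicator (fun _ => pbar) ω ∂μ := hindval.symm
    _ ≤ ∫ ω, h ω ∂μ := hint1
    _ = ∫ ω, sSup ({x | ∃ i, x = P i ∧ P i ≤ v i ω} ∪ {0}) ∂μ := by
        refine integral_congr_ae (Filter.Eventually.of_forall fun ω => ?_)
        exact (hgh ω).symm
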